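/- Suboptimality-to-estimation-error conversion (Lemma conversion, core inequality): let X, A be finite, ν₀ ∈ Δ(X), π*, π_data policies with π_data fully supported, and Δ̂, Δ* : X×A×A → ℝ. Suppose (pessimism) Σ_b π_data(b|x)·Δ̂(x,a,b) ≤ Σ_b π_data(b|x)·Δ*(x,a,b) for all x,a. Then for any policy π_out: Σ_x ν₀(x) Σ_{a,b} (π*(a|x) - π_out(a|x))·π_data(b|x)·(Δ*(x,a,b) - Δ̂(x,a,b)) ≤ √(C*·E), where C* = Σ_x ν₀(x) Σ_a π*(a|x)²/π_data(a|x) and E = Σ_x ν₀(x) Σ_a π_data(a|x)·(Σ_b π_data(b|x)(Δ*(x,a,b) - Δ̂(x,a,b)))². -/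

import Mathlib

open Real

/-- Suboptimality-to-estimation-error conversion: under the pessimism
hypothesis, the weighted gap between `π*` and `π_out` measured through
`Δ* - Δ̂` is bounded by `√(C*·E)`, where `C*` is the single-policy
concentrability coefficient and `E` the mean-squared estimation error. -/
theorem suboptimality_to_estimation_error
    {X A : Type*} [Fintype X] [Fintype A]
    (ν₀ : X → ℝ) (hν : ∀ x, 0 ≤ ν₀ x) (hνsum : ∑ x, ν₀ x = 1)
    (πstar πout πdata : X → A → ℝ)
    (hπstar : ∀ x a, 0 ≤ πstar x a) (hπstarsum : ∀ x, ∑ a, πstar x a = 1)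
    (hπout : ∀ x a, 0 ≤ πout x a) (hπoutsum : ∀ x, ∑ a, πout x a = 1)
    (hπdata : ∀ x a, 0 < πdata x a) (hπdatasum : ∀ x, ∑ a, πdata x a = 1)
    (Δhat Δstar : X → A → A → ℝ)
    (hpess : ∀ x a, ∑ b, πdata x b * Δhat x a b ≤ ∑ b, πdata x b * Δstar x a b)
    (Cstar E : ℝ)
    (hC : Cstar = ∑ x, ν₀ x * ∑ a, (πstar x a)^2 / πdata x a)
    (hE : E = ∑ x, ν₀ x * ∑ a, πdata x a *
      (∑ b, πdata x b * (Δstar x a b - Δhat x a b))^2) :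
    ∑ x, ν₀ x * ∑ a, ∑ b,
        (πstar x a - πout x a) * πdata x b * (Δstar x a b - Δhat x a b)
      ≤ Real.sqrt (Cstar * E) := by
  set g : X → A → ℝ := fun x a => ∑ b, πdata x b * (Δstar x a b - Δhat x a b)
    with hg
  have hg0 : ∀ x a, 0 ≤ g x a := by
    intro x a
    have := hpess x a
    simp only [hg, mul_sub, Finset.sum_sub_distrib]
    linarith
  -- rewrite LHS
  have hLHS : (∑ x, ν₀ x * ∑ a, ∑ b,
      (πstar x a - πout x a) * πdata x b * (Δstar x a b - Δhat x a b))
      = ∑ x, ν₀ x * ∑ a, (πstar x a - πout x a) * g x a := by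
    refine Finset.sum_congr rfl fun x _ => ?_
    congr 1
    refine Finset.sum_congr rfl fun a _ => ?_
    rw [hg, Finset.mul_sum]
    refine Finset.sum_congr rfl fun b _ => by ring
  rw [hLHS]
  -- drop πout term
  have hstep : (∑ x, ν₀ x * ∑ a, (πstar x a - πout x a) * g x a)
      ≤ ∑ x, ν₀ x * ∑ a, πstar x a * g x a := by
    refine Finset.sum_le_sum fun x _ => mul_le_mul_of_nonneg_left ?_ (hν x)
    refine Finset.sum_le_sum fun a _ => ?_
    have := mul_nonneg (hπout x a) (hg0 x a)
    nlinarith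
  refine hstep.trans ?_
  -- Cauchy-Schwarz
  set f₁ : X × A → ℝ := fun p => Real.sqrt (ν₀ p.1) * πstar p.1 p.2 /
      Real.sqrt (πdata p.1 p.2) with hf₁
  set f₂ : X × A → ℝ := fun p => Real.sqrt (ν₀ p.1) * Real.sqrt (πdata p.1 p.2)
      * g p.1 p.2 with hf₂
  have hprod : ∀ p : X × A, f₁ p * f₂ p = ν₀ p.1 * (πstar p.1 p.2 * g p.1 p.2) := by
    intro p
    have h1 : Real.sqrt (ν₀ p.1) * Real.sqrt (ν₀ p.1) = ν₀ p.1 :=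
      Real.mul_self_sqrt (hν p.1)
    have h2 : Real.sqrt (πdata p.1 p.2) ≠ 0 :=
      (Real.sqrt_pos.mpr (hπdata p.1 p.2)).ne'
    field_simp [hf₁, hf₂]
    ring_nf
    rw [hf₁, hf₂]; dsimp only; rw [show Real.sqrt (ν₀ p.1) * πstar p.1 p.2 / Real.sqrt (πdata p.1 p.2) * (Real.sqrt (ν₀ p.1) * Real.sqrt (πdata p.1 p.2) * g p.1 p.2) = (Real.sqrt (ν₀ p.1) * Real.sqrt (ν₀ p.1)) * πstar p.1 p.2 * g p.1 p.2 * (Real.sqrt (πdata p.1 p.2) / Real.sqrt (πdata p.1 p.2)) by ring, h1, div_self h2]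
    ring
  have hsum1 : (∑ x, ν₀ x * ∑ a, πstar x a * g x a) = ∑ p : X × A, f₁ p * f₂ p := by
    rw [Fintype.sum_prod_type]
    refine Finset.sum_congr rfl fun x _ => ?_
    rw [Finset.mul_sum]
    exact Finset.sum_congr rfl fun a _ => (hprod (x, a)).symm
  have hsq1 : (∑ p : X × A, (f₁ p)^2) = Cstar := by
    rw [hC, Fintype.sum_prod_type]
    refine Finset.sum_congr rfl fun x _ => ?_
    rw [Finset.mul_sum]
    refine Finset.sum_congr rfl fun a _ => ?_
    rw [hf₁]
    rw [div_pow, mul_pow, Real.sq_sqrt (hν x), Real.sq_sqrt (hπdata x a).le]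
    ring
  have hsq2 : (∑ p : X × A, (f₂ p)^2) = E := by
    rw [hE, Fintype.sum_prod_type]
    refine Finset.sum_congr rfl fun x _ => ?_
    rw [Finset.mul_sum]
    refine Finset.sum_congr rfl fun a _ => ?_
    rw [hf₂]
    rw [mul_pow, mul_pow, Real.sq_sqrt (hν x), Real.sq_sqrt (hπdata x a).le]
    ring
  have hcs : (∑ p : X × A, f₁ p * f₂ p)^2
      ≤ (∑ p : X × A, (f₁ p)^2) * ∑ p : X × A, (f₂ p)^2 :=
    Finset.sum_mul_sq_le_sq_mul_sq _ _ _
  rw [hsum1]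
  calc (∑ p : X × A, f₁ p * f₂ p) ≤ |∑ p : X × A, f₁ p * f₂ p| := le_abs_self _
    _ = Real.sqrt ((∑ p : X × A, f₁ p * f₂ p)^2) := (Real.sqrt_sq_eq_abs _).symm
    _ ≤ Real.sqrt (Cstar * E) := by
        apply Real.sqrt_le_sqrt
        rw [← hsq1, ← hsq2]; exact hcs
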